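/- Let ρ be a positive definite matrix on a bipartite space ℂᵐ ⊗ ℂⁿ with Tr ρ = 1, and let τ* be a positive definite matrix with ‖τ*^Γ‖₁ ≤ 1. If S(ρ‖τ*) ≤ S(ρ‖τ) for every positive definite τ with ‖τ^Γ‖₁ ≤ 1, then ‖τ*^Γ‖₁ = 1. -/

import Mathlib

open Matrix
open scoped ComplexOrder

/-- The square root `Matrix.PosSemidef.sqrt` of the older Mathlib (removed since), with its old definition. -/
noncomputable def Matrix.PosSemidef.sqrt {n 𝕜 : Type*} [Fintype n] [DecidableEq n] [RCLike 𝕜]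
    {A : Matrix n n 𝕜} (hA : A.PosSemidef) : Matrix n n 𝕜 :=
  (hA.1.eigenvectorUnitary : Matrix n n 𝕜) * diagonal ((↑) ∘ Real.sqrt ∘ hA.1.eigenvalues) *
    (star hA.1.eigenvectorUnitary : Matrix n n 𝕜)

noncomputable def traceNorm {ι : Type*} [Fintype ι] [DecidableEq ι]
    (A : Matrix ι ι ℂ) : ℝ :=
  ((Matrix.posSemidef_conjTranspose_mul_self A).sqrt.trace).re

noncomputable def mfun {ι : Type*} [Fintype ι] [DecidableEq ι] (g : ℝ → ℝ)
    (A : Matrix ι ι ℂ) : Matrix ι ι ℂ :=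
  if hA : A.IsHermitian then
    (hA.eigenvectorUnitary : Matrix ι ι ℂ) *
      Matrix.diagonal (fun i => (g (hA.eigenvalues i) : ℂ)) *
      (star hA.eigenvectorUnitary : Matrix ι ι ℂ)
  else 0

noncomputable def divDiff {ι : Type*} (g : ℝ → ℝ) (a : ι → ℝ) : Matrix ι ι ℝ :=
  Matrix.of fun i j =>
    if a i = a j then deriv g (a i) else (g (a i) - g (a j)) / (a i - a j)

noncomputable def Dop {ι : Type*} [Fintype ι] [DecidableEq ι] (g : ℝ → ℝ)
    {A : Matrix ι ι ℂ} (hA : A.IsHermitian) (B : Matrix ι ι ℂ) : Matrix ι ι ℂ :=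
  (hA.eigenvectorUnitary : Matrix ι ι ℂ) *
    (((divDiff g hA.eigenvalues).map Complex.ofReal) ⊙
      ((star hA.eigenvectorUnitary : Matrix ι ι ℂ) * B *
        (hA.eigenvectorUnitary : Matrix ι ι ℂ))) *
    (star hA.eigenvectorUnitary : Matrix ι ι ℂ)

noncomputable def relEnt {ι : Type*} [Fintype ι] [DecidableEq ι]
    (ρ σ : Matrix ι ι ℂ) : ℝ :=
  ((ρ * (mfun Real.log ρ - mfun Real.log σ)).trace).re

def ptrans {m n : Type*} (A : Matrix (m × n) (m × n) ℂ) : Matrix (m × n) (m × n) ℂ :=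
  Matrix.of fun p q => A (p.1, q.2) (q.1, p.2)

section Aux

variable {ι : Type*} [Fintype ι] [DecidableEq ι]

set_option linter.unusedSectionVars false

lemma aux_mfun_eq_cfc {A : Matrix ι ι ℂ} (hA : A.IsHermitian) (g : ℝ → ℝ) :
    mfun g A = cfc g A := by
  rw [mfun, dif_pos hA, hA.cfc_eq]
  rfl

lemma aux_hermitian_smul {A : Matrix ι ι ℂ} (hA : A.IsHermitian) (c : ℝ) :
    (c • A).IsHermitian := by
  unfold Matrix.IsHermitian at *
  rw [conjTranspose_smul, hA]
  norm_num

lemma aux_posDef_smul {A : Matrix ι ι ℂ} (hA : A.PosDef) {c : ℝ} (hc : 0 < c) :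
    (c • A).PosDef := by
  exact hA.smul hc

lemma aux_cfc_log_smul {A : Matrix ι ι ℂ} (hA : A.PosDef) {c : ℝ} (hc : 0 < c) :
    cfc Real.log (c • A) = algebraMap ℝ (Matrix ι ι ℂ) (Real.log c) + cfc Real.log A := by
  have hAh : A.IsHermitian := hA.1
  have hfin := A.finite_real_spectrum
  have hspec : ∀ x ∈ spectrum ℝ A, 0 < x := by
    intro x hx
    obtain ⟨i, rfl⟩ := hAh.spectrum_real_eq_range_eigenvalues ▸ hx
    exact hA.eigenvalues_pos i
  have h1 := cfc_comp_const_mul (R := ℝ) (A := Matrix ι ι ℂ) c Real.log A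
    ((hfin.image _).continuousOn _) hAh
  rw [← h1]
  rw [cfc_congr (g := fun x => Real.log c + Real.log x)
    (fun x hx => Real.log_mul hc.ne' (hspec x hx).ne')]
  exact cfc_const_add (Real.log c) Real.log A (hfin.continuousOn _) hAh

lemma aux_mfun_log_smul {A : Matrix ι ι ℂ} (hA : A.PosDef) {c : ℝ} (hc : 0 < c) :
    mfun Real.log (c • A) = Real.log c • (1 : Matrix ι ι ℂ) + mfun Real.log A := by
  rw [aux_mfun_eq_cfc (aux_hermitian_smul hA.1 c), aux_mfun_eq_cfc hA.1,
    aux_cfc_log_smul hA hc, Algebra.algebraMap_eq_smul_one]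

lemma aux_relEnt_smul {ρ A : Matrix ι ι ℂ} (hA : A.PosDef) {c : ℝ} (hc : 0 < c)
    (hρtr : ρ.trace = 1) :
    relEnt ρ (c • A) = relEnt ρ A - Real.log c := by
  unfold relEnt
  rw [aux_mfun_log_smul hA hc]
  have : mfun Real.log ρ - (Real.log c • (1 : Matrix ι ι ℂ) + mfun Real.log A)
      = (mfun Real.log ρ - mfun Real.log A) - Real.log c • (1 : Matrix ι ι ℂ) := by
    abel
  rw [this, mul_sub, Matrix.trace_sub, mul_smul_comm, mul_one, Matrix.trace_smul, hρtr]
  simp [Complex.smul_re]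

lemma aux_trace_sqrt {M : Matrix ι ι ℂ} (hM : M.PosSemidef) :
    hM.sqrt.trace = ∑ i, (Real.sqrt (hM.1.eigenvalues i) : ℂ) := by
  rw [Matrix.PosSemidef.sqrt, Matrix.trace_mul_cycle]
  rw [show (star hM.1.eigenvectorUnitary.1 * hM.1.eigenvectorUnitary.1 : Matrix ι ι ℂ) = 1 from
    (Matrix.mem_unitaryGroup_iff'.mp hM.1.eigenvectorUnitary.2)]
  simp [Matrix.trace_diagonal, Function.comp]

lemma aux_sqrt_eq_cfc {M : Matrix ι ι ℂ} (hM : M.PosSemidef) :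
    hM.sqrt = cfc Real.sqrt M := by
  rw [Matrix.PosSemidef.sqrt, hM.1.cfc_eq]
  rfl

lemma aux_traceNorm_nonneg (A : Matrix ι ι ℂ) : 0 ≤ traceNorm A := by
  rw [traceNorm, aux_trace_sqrt]
  simp only [Complex.re_sum, Complex.ofReal_re]
  exact Finset.sum_nonneg fun i _ => Real.sqrt_nonneg _

lemma aux_traceNorm_eq_zero {A : Matrix ι ι ℂ} (h : traceNorm A = 0) : A = 0 := by
  have hM := Matrix.posSemidef_conjTranspose_mul_self A
  rw [traceNorm, aux_trace_sqrt] at h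
  simp only [Complex.re_sum, Complex.ofReal_re] at h
  have hz : ∀ i, hM.1.eigenvalues i = 0 := by
    intro i
    have h1 := (Finset.sum_eq_zero_iff_of_nonneg
      (fun i _ => Real.sqrt_nonneg (hM.1.eigenvalues i))).mp h i (Finset.mem_univ i)
    have h2 := hM.eigenvalues_nonneg i
    nlinarith [Real.sq_sqrt h2, h1]
  have hM0 : Aᴴ * A = 0 := by
    have hst := hM.1.spectral_theorem
    rw [hst]
    have : Matrix.diagonal (RCLike.ofReal ∘ hM.1.eigenvalues : ι → ℂ) = 0 := by
      ext i j
      by_cases hij : i = j <;> simp [Matrix.diagonal, hij, hz]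
    rw [this]
    simp
  exact Matrix.conjTranspose_mul_self_eq_zero.mp hM0

lemma aux_posSemidef_real_smul {M : Matrix ι ι ℂ} (hM : M.PosSemidef) {r : ℝ} (hr : 0 ≤ r) :
    (r • M).PosSemidef := by
  exact hM.smul hr

lemma aux_traceNorm_smul (A : Matrix ι ι ℂ) {r : ℝ} (hr : 0 ≤ r) :
    traceNorm (r • A) = r * traceNorm A := by
  have hM := Matrix.posSemidef_conjTranspose_mul_self A
  unfold traceNorm
  rw [aux_sqrt_eq_cfc, aux_sqrt_eq_cfc]
  have h1 : (r • A)ᴴ * (r • A) = (r ^ 2) • (Aᴴ * A) := by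
    rw [conjTranspose_smul, smul_mul_smul_comm, sq, star_trivial]
  have h3 : cfc Real.sqrt ((r • A)ᴴ * (r • A)) = cfc (fun x => Real.sqrt (r ^ 2 * x)) (Aᴴ * A) := by
    rw [h1]
    exact (cfc_comp_const_mul (R := ℝ) (A := Matrix ι ι ℂ) (r ^ 2) Real.sqrt (Aᴴ * A)
      (ha := hM.1)).symm
  rw [h3]
  rw [cfc_congr (g := fun x => r * Real.sqrt x)
    (fun x _ => by rw [Real.sqrt_mul (by positivity), Real.sqrt_sq hr])]
  rw [cfc_const_mul r Real.sqrt (Aᴴ * A), Matrix.trace_smul]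
  simp [Complex.smul_re]

lemma aux_ptrans_smul {m n : Type*} (A : Matrix (m × n) (m × n) ℂ) (r : ℝ) :
    ptrans (r • A) = r • ptrans A := by
  ext p q
  simp [ptrans]

end Aux

theorem rains_minimizer_on_boundary
    {m n : ℕ} (ρ τs : Matrix (Fin m × Fin n) (Fin m × Fin n) ℂ)
    (hρ : ρ.PosDef) (hρtr : ρ.trace = 1)
    (hτs : τs.PosDef) (hτsΓ : traceNorm (ptrans τs) ≤ 1)
    (hmin : ∀ τ : Matrix (Fin m × Fin n) (Fin m × Fin n) ℂ,
      τ.PosDef → traceNorm (ptrans τ) ≤ 1 → relEnt ρ τs ≤ relEnt ρ τ) :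
    traceNorm (ptrans τs) = 1 := by
  -- the index type is nonempty
  have hne : Nonempty (Fin m × Fin n) := by
    by_contra h
    rw [not_nonempty_iff] at h
    rw [Matrix.trace] at hρtr
    simp [Finset.univ_eq_empty] at hρtr
  obtain ⟨p⟩ := hne
  -- partial transpose of τs is nonzero
  have hpt_ne : ptrans τs ≠ 0 := by
    intro h0
    have hdiag : τs p p ≠ 0 := by
      exact ne_of_gt hτs.diag_pos
    have : ptrans τs p p = 0 := by rw [h0]; rfl
    rw [show ptrans τs p p = τs p p from rfl] at this
    exact hdiag this
  set c := traceNorm (ptrans τs) with hc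
  have hc0 : 0 < c := by
    rcases lt_or_eq_of_le (aux_traceNorm_nonneg (ptrans τs)) with h | h
    · exact h
    · exact absurd (aux_traceNorm_eq_zero h.symm) hpt_ne
  refine le_antisymm hτsΓ ?_
  by_contra hlt
  push_neg at hlt
  have hcinv : (0:ℝ) < c⁻¹ := inv_pos.mpr hc0
  have hmin' := hmin (c⁻¹ • τs) (aux_posDef_smul hτs hcinv) (by
    rw [aux_ptrans_smul, aux_traceNorm_smul _ hcinv.le, ← hc, inv_mul_cancel₀ hc0.ne'])
  rw [aux_relEnt_smul hτs hcinv hρtr, Real.log_inv] at hmin'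
  have hlog : Real.log c < 0 := Real.log_neg hc0 hlt
  linarith
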